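/- Let P_A and P_B be orthogonal projections onto subspaces U and V of a finite-dimensional real inner product space. For any vector y, define the residual sequence r_0 = y, r_{k+1} = (I - P_B)(I - P_A) r_k. Then r_k converges to the orthogonal projection of y onto the orthogonal complement of U + V. -/

import Mathlib

open Submodule Filter Topology

noncomputable def proj {E : Type*} [NormedAddCommGroup E] [InnerProductSpace ℝ E]
    [FiniteDimensional ℝ E] (U : Submodule ℝ E) : E →ₗ[ℝ] E :=
  U.subtype ∘ₗ (orthogonalProjection U).toLinearMap

section aux

variable {E : Type*} [NormedAddCommGroup E] [InnerProductSpace ℝ E] [FiniteDimensional ℝ E]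

lemma proj_apply (K : Submodule ℝ E) (x : E) : proj K x = (orthogonalProjection K x : E) := rfl

lemma norm_proj_le (K : Submodule ℝ E) (x : E) : ‖proj K x‖ ≤ ‖x‖ := by
  have h := norm_sq_eq_add_norm_sq_projection x K
  rw [proj_apply, Submodule.norm_coe]
  nlinarith [norm_nonneg (orthogonalProjection Kᗮ x), norm_nonneg x,
    norm_nonneg (orthogonalProjection K x)]

lemma mem_of_norm_proj_eq (K : Submodule ℝ E) (x : E) (h : ‖proj K x‖ = ‖x‖) : x ∈ K := by
  have h2 := norm_sq_eq_add_norm_sq_projection x K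
  rw [proj_apply, Submodule.norm_coe] at h
  have hsq : ‖orthogonalProjection Kᗮ x‖ ^ 2 = 0 := by rw [h] at h2; linarith
  have hz : ‖orthogonalProjection Kᗮ x‖ = 0 := by
    exact pow_eq_zero_iff two_ne_zero |>.mp hsq
  have hz' : (orthogonalProjection Kᗮ x : E) = 0 := by
    rw [norm_eq_zero.mp hz]; rfl
  have h3 : (orthogonalProjection K x : E) + (orthogonalProjection Kᗮ x : E) = x :=
    starProjection_add_starProjection_orthogonal (K := K) x
  rw [hz', add_zero] at h3
  rw [← h3]
  exact (orthogonalProjection K x).2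

lemma proj_of_mem {K : Submodule ℝ E} {x : E} (h : x ∈ K) : proj K x = x := by
  rw [proj_apply]
  exact congrArg _ (orthogonalProjection_mem_subspace_eq_self (⟨x, h⟩ : K))

lemma inner_proj_left (K : Submodule ℝ E) (u v : E) :
    @inner ℝ _ _ (proj K u) v = @inner ℝ _ _ u (proj K v) :=
  inner_starProjection_left_eq_right K u v

end aux

theorem stmt0 {E : Type*} [NormedAddCommGroup E] [InnerProductSpace ℝ E] [FiniteDimensional ℝ E]
    (U V : Submodule ℝ E) (y : E) (r : ℕ → E) (hr0 : r 0 = y)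
    (hr : ∀ k, r (k + 1) = (LinearMap.id - proj V : Module.End ℝ E) ((LinearMap.id - proj U : Module.End ℝ E) (r k))) :
    Tendsto r atTop (𝓝 (proj (U ⊔ V)ᗮ y)) := by
  set W : Submodule ℝ E := (U ⊔ V)ᗮ with hW
  have hWeq : Uᗮ ⊓ Vᗮ = W := Submodule.inf_orthogonal U V
  set T : E →ₗ[ℝ] E := (LinearMap.id - proj V) ∘ₗ (LinearMap.id - proj U) with hT
  -- T x = proj Vᗮ (proj Uᗮ x)
  have hsub : ∀ (K : Submodule ℝ E) (x : E),
      (LinearMap.id - proj K : Module.End ℝ E) x = proj Kᗮ x := by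
    intro K x
    exact (starProjection_orthogonal_val (K := K) x).symm
  have hTapp : ∀ x, T x = proj Vᗮ (proj Uᗮ x) := by
    intro x
    simp only [hT, LinearMap.comp_apply]
    rw [hsub U x, hsub V _]
  -- r k = T^k y
  have hrk : ∀ k, r k = (T ^ k) y := by
    intro k
    induction k with
    | zero => simpa using hr0
    | succ n ih =>
      rw [hr n, ih, pow_succ', Module.End.mul_apply]
      rfl
  -- T fixes W
  have hfix : ∀ x ∈ W, T x = x := by
    intro x hx
    rw [← hWeq] at hx
    rw [hTapp, proj_of_mem hx.1, proj_of_mem hx.2]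
  have hfixpow : ∀ (k : ℕ), ∀ x ∈ W, (T ^ k) x = x := by
    intro k
    induction k with
    | zero => intro x _; simp
    | succ n ih =>
      intro x hx
      rw [pow_succ', Module.End.mul_apply, ih x hx, hfix x hx]
  -- T maps Wᗮ into Wᗮ
  have hinv : ∀ x ∈ Wᗮ, T x ∈ Wᗮ := by
    intro x hx
    rw [Submodule.mem_orthogonal]
    intro u hu
    rw [← hWeq] at hu
    rw [hTapp, real_inner_comm, inner_proj_left, proj_of_mem hu.2, inner_proj_left,
      proj_of_mem hu.1, real_inner_comm]
    exact (Submodule.mem_orthogonal W x).mp hx u (hWeq ▸ hu)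
  -- norm bound along the chain
  have hTnorm : ∀ x, ‖T x‖ ≤ ‖x‖ := by
    intro x
    rw [hTapp]
    exact le_trans (norm_proj_le _ _) (norm_proj_le _ _)
  -- strict contraction on Wᗮ
  have hcon : ∃ c : ℝ, 0 ≤ c ∧ c < 1 ∧ ∀ x ∈ Wᗮ, ‖T x‖ ≤ c * ‖x‖ := by
    by_cases hb : Wᗮ = ⊥
    · refine ⟨0, le_refl _, one_pos, ?_⟩
      intro x hx
      rw [hb, Submodule.mem_bot] at hx
      simp [hx]
    · -- sphere of Wᗮ is nonempty compact
      obtain ⟨x₀, hx₀, hx₀ne⟩ := Submodule.exists_mem_ne_zero_of_ne_bot hb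
      set S : Set E := {x : E | x ∈ Wᗮ ∧ ‖x‖ = 1} with hS
      have hSne : S.Nonempty := by
        refine ⟨‖x₀‖⁻¹ • x₀, Submodule.smul_mem _ _ hx₀, ?_⟩
        rw [norm_smul, norm_inv, norm_norm, inv_mul_cancel₀ (norm_ne_zero_iff.mpr hx₀ne)]
      have hScpt : IsCompact S := by
        have : S = (Wᗮ : Set E) ∩ Metric.sphere 0 1 := by
          ext x; simp [hS, Set.mem_inter_iff, mem_sphere_zero_iff_norm]
        rw [this]
        exact (isCompact_sphere (0:E) 1).of_isClosed_subset
          ((Submodule.closed_of_finiteDimensional Wᗮ).inter Metric.isClosed_sphere)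
          Set.inter_subset_right
      have hcont : Continuous fun x : E => ‖T x‖ := (T.continuous_of_finiteDimensional).norm
      obtain ⟨z, hzS, hzmax⟩ := hScpt.exists_isMaxOn hSne hcont.continuousOn
      refine ⟨‖T z‖, norm_nonneg _, ?_, ?_⟩
      · -- strict inequality
        by_contra h
        push_neg at h
        have h1 : ‖T z‖ ≤ ‖proj Uᗮ z‖ := by rw [hTapp]; exact norm_proj_le _ _
        have h2 : ‖proj Uᗮ z‖ ≤ ‖z‖ := norm_proj_le _ _
        have hz1 : ‖z‖ = 1 := hzS.2
        have e2 : ‖proj Uᗮ z‖ = ‖z‖ := le_antisymm h2 (by linarith)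
        have hzU : z ∈ Uᗮ := mem_of_norm_proj_eq _ _ e2
        have hPz : proj Uᗮ z = z := proj_of_mem hzU
        have e1 : ‖proj Vᗮ z‖ = ‖z‖ := by
          have : T z = proj Vᗮ z := by rw [hTapp, hPz]
          rw [← this]
          refine le_antisymm (hTnorm z) ?_
          linarith
        have hzV : z ∈ Vᗮ := mem_of_norm_proj_eq _ _ e1
        have hzW : z ∈ W := hWeq ▸ ⟨hzU, hzV⟩
        have : z = 0 := by
          have := Submodule.mem_orthogonal W z |>.mp hzS.1 z hzW
          exact inner_self_eq_zero.mp this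
        rw [this, norm_zero] at hz1
        exact one_ne_zero hz1.symm
      · intro x hx
        rcases eq_or_ne x 0 with h0 | h0
        · simp [h0]
        · have hmem : ‖x‖⁻¹ • x ∈ S :=
            ⟨Submodule.smul_mem _ _ hx, by
              rw [norm_smul, norm_inv, norm_norm, inv_mul_cancel₀ (norm_ne_zero_iff.mpr h0)]⟩
          have := hzmax hmem
          simp only [Set.mem_setOf_eq, map_smul, norm_smul, norm_inv, norm_norm] at this
          have hxpos : (0:ℝ) < ‖x‖ := norm_pos_iff.mpr h0
          calc ‖T x‖ = ‖x‖ * (‖x‖⁻¹ * ‖T x‖) := by field_simp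
          _ ≤ ‖x‖ * ‖T z‖ := by
              apply mul_le_mul_of_nonneg_left _ (le_of_lt hxpos)
              exact this
          _ = ‖T z‖ * ‖x‖ := mul_comm _ _
  obtain ⟨c, hc0, hc1, hc⟩ := hcon
  -- decomposition
  set w : E := proj W y with hw
  have hwW : w ∈ W := (orthogonalProjection W y).2
  set z : E := y - w with hz
  have hzW : z ∈ Wᗮ := by
    rw [hz, hw, proj_apply]
    exact sub_starProjection_mem_orthogonal (K := W) y
  have hzmem : ∀ k, (T ^ k) z ∈ Wᗮ := by
    intro k
    induction k with
    | zero => simpa using hzW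
    | succ n ih => rw [pow_succ', Module.End.mul_apply]; exact hinv _ ih
  have hznorm : ∀ k, ‖(T ^ k) z‖ ≤ c ^ k * ‖z‖ := by
    intro k
    induction k with
    | zero => simp
    | succ n ih =>
      rw [pow_succ', Module.End.mul_apply]
      calc ‖T ((T ^ n) z)‖ ≤ c * ‖(T ^ n) z‖ := hc _ (hzmem n)
      _ ≤ c * (c ^ n * ‖z‖) := mul_le_mul_of_nonneg_left ih hc0
      _ = c ^ (n + 1) * ‖z‖ := by ring
  have hdecomp : ∀ k, r k = w + (T ^ k) z := by
    intro k
    rw [hrk k]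
    have hy : y = w + z := by rw [hz]; abel
    rw [hy, map_add, hfixpow k w hwW]
  -- conclude
  have hlim : Tendsto (fun k => (T ^ k) z) atTop (𝓝 0) := by
    rw [tendsto_zero_iff_norm_tendsto_zero]
    have hb : Tendsto (fun k => c ^ k * ‖z‖) atTop (𝓝 0) := by
      have := (tendsto_pow_atTop_nhds_zero_of_lt_one hc0 hc1).mul_const ‖z‖
      simpa using this
    exact squeeze_zero (fun k => norm_nonneg _) hznorm hb
  have hre : r = fun k => w + (T ^ k) z := funext hdecomp
  have hfin : Tendsto r atTop (𝓝 (w + 0)) := by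
    rw [hre]
    exact tendsto_const_nhds.add hlim
  simpa using hfin
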